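/- Let K be a number field whose absolute discriminant Δ_K is odd, and let 𝔭 ⊆ O_K be a prime ideal lying over 2. Let α ∈ O_K be a nonzero element such that 𝔭 does not divide the ideal αO_K. Then 2α is not a square in K^×, so K(√(2α)) is a quadratic extension of K; moreover, 𝔭 ramifies in the extension K(√(2α))/K. -/

import Mathlib

open NumberField

set_option maxHeartbeats 1000000 in
set_option synthInstance.maxHeartbeats 100000 in
lemma aux_discr_mem {K : Type*} [Field K] [NumberField K] (p : Ideal ℤ) [p.IsMaximal]
    (x : 𝓞 K) (hx : x ∉ Ideal.map (algebraMap ℤ (𝓞 K)) p)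
    (hx2 : x * x ∈ Ideal.map (algebraMap ℤ (𝓞 K)) p) :
    (NumberField.discr K) ∈ p := by
  classical
  let b := RingOfIntegers.basis K
  let π : ℤ →+* ℤ ⧸ p := Ideal.Quotient.mk p
  let μ : (𝓞 K) →+* (𝓞 K) ⧸ Ideal.map (algebraMap ℤ (𝓞 K)) p :=
    Ideal.Quotient.mk (Ideal.map (algebraMap ℤ (𝓞 K)) p)
  let M : Matrix (Module.Free.ChooseBasisIndex ℤ (𝓞 K))
      (Module.Free.ChooseBasisIndex ℤ (𝓞 K)) (ℤ ⧸ p) :=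
    fun i j => Algebra.trace (ℤ ⧸ p) ((𝓞 K) ⧸ Ideal.map (algebraMap ℤ (𝓞 K)) p) (μ (b i * b j))
  -- step 1 : the reduction of the discriminant is the determinant of M
  have step1 : π (NumberField.discr K) = M.det := by
    rw [NumberField.discr, Algebra.discr_def, RingHom.map_det]
    congr 1
    ext i j
    simp only [RingHom.mapMatrix_apply, Matrix.map_apply, Algebra.traceMatrix_apply,
      Algebra.traceForm_apply, M, μ, π, b]
    rw [← Algebra.intTrace_eq_trace, ← Algebra.trace_quotient_eq_of_isDedekindDomain]
  -- step 2 : the determinant of M is zero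
  have step2 : M.det = 0 := by
    rw [← Matrix.exists_vecMul_eq_zero_iff]
    refine ⟨fun i => π (b.repr x i), ?_, ?_⟩
    · intro hc
      apply hx
      have hall : ∀ i, b.repr x i ∈ p := by
        intro i
        have h0 : π (b.repr x i) = 0 := congrFun hc i
        rwa [Ideal.Quotient.eq_zero_iff_mem] at h0
      rw [← b.sum_repr x]
      refine Ideal.sum_mem _ fun i _ => ?_
      rw [Algebra.smul_def]
      exact Ideal.mul_mem_right _ _ (Ideal.mem_map_of_mem _ (hall i))
    · funext j
      have hz : μ (x * b j) * μ (x * b j) = 0 := by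
        rw [← map_mul, Ideal.Quotient.eq_zero_iff_mem]
        have h' : x * b j * (x * b j) = x * x * (b j * b j) := by ring
        rw [h']
        exact Ideal.mul_mem_right _ _ hx2
      have htr : Algebra.trace (ℤ ⧸ p) ((𝓞 K) ⧸ Ideal.map (algebraMap ℤ (𝓞 K)) p)
          (μ (x * b j)) = 0 := by
        have hnil : IsNilpotent
            (Algebra.lmul (ℤ ⧸ p) ((𝓞 K) ⧸ Ideal.map (algebraMap ℤ (𝓞 K)) p) (μ (x * b j))) := by
          refine ⟨2, ?_⟩
          rw [← map_pow, pow_two, hz, map_zero]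
        letI : Field (ℤ ⧸ p) := Ideal.Quotient.field p
        haveI : Module.Finite (ℤ ⧸ p) ((𝓞 K) ⧸ Ideal.map (algebraMap ℤ (𝓞 K)) p) := by
          haveI : Module.Finite ℤ ((𝓞 K) ⧸ Ideal.map (algebraMap ℤ (𝓞 K)) p) :=
            Module.Finite.of_surjective
              (Ideal.Quotient.mkₐ ℤ (Ideal.map (algebraMap ℤ (𝓞 K)) p)).toLinearMap
              (Ideal.Quotient.mkₐ_surjective ℤ _)
          exact Module.Finite.of_restrictScalars_finite ℤ _ _
        rw [Algebra.trace_apply]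
        exact (LinearMap.isNilpotent_trace_of_isNilpotent hnil).eq_zero
      have key : ∑ i, π (b.repr x i) • μ (b i * b j) = μ (x * b j) := by
        have hterm : ∀ i, π (b.repr x i) • μ (b i * b j) = μ ((b.repr x i • b i) * b j) := by
          intro i
          rw [Algebra.smul_def, Ideal.Quotient.algebraMap_quotient_map_quotient,
            ← map_mul]
          congr 1
          rw [Algebra.smul_def]
          ring
        rw [Finset.sum_congr rfl fun i _ => hterm i, ← map_sum]
        congr 1
        rw [← Finset.sum_mul, b.sum_repr x]
      calc Matrix.vecMul (fun i => π (b.repr x i)) M j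
          = ∑ i, π (b.repr x i) * M i j := rfl
        _ = ∑ i, Algebra.trace (ℤ ⧸ p) ((𝓞 K) ⧸ Ideal.map (algebraMap ℤ (𝓞 K)) p)
              (π (b.repr x i) • μ (b i * b j)) := by
            simp [M, map_smul, smul_eq_mul]
        _ = Algebra.trace (ℤ ⧸ p) ((𝓞 K) ⧸ Ideal.map (algebraMap ℤ (𝓞 K)) p)
              (∑ i, π (b.repr x i) • μ (b i * b j)) := by
            rw [map_sum]
        _ = 0 := by rw [key, htr]
  rw [step2] at step1
  rwa [← Ideal.Quotient.eq_zero_iff_mem]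

lemma aux_even_discr {K : Type*} [Field K] [NumberField K] (x : 𝓞 K)
    (hx : x ∉ Ideal.span {(2 : 𝓞 K)})
    (hx2 : x * x ∈ Ideal.span {(2 : 𝓞 K)}) : ¬ Odd (NumberField.discr K) := by
  haveI hpmax : (Ideal.span {(2 : ℤ)}).IsMaximal :=
    PrincipalIdealRing.isMaximal_of_irreducible Int.prime_two.irreducible
  have hpS : Ideal.map (algebraMap ℤ (𝓞 K)) (Ideal.span {(2 : ℤ)})
      = Ideal.span {(2 : 𝓞 K)} := by
    rw [Ideal.map_span, Set.image_singleton, map_ofNat]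
  intro hodd
  have h2 := aux_discr_mem (Ideal.span {(2 : ℤ)}) x (hpS ▸ hx) (hpS ▸ hx2)
  rw [Ideal.mem_span_singleton] at h2
  rw [← Int.not_even_iff_odd] at hodd
  exact hodd (even_iff_two_dvd.mpr h2)

lemma aux_not_sq_dvd {K : Type*} [Field K] [NumberField K]
    (hdisc : Odd (NumberField.discr K))
    (𝔭 : Ideal (𝓞 K)) (h𝔭 : 𝔭.IsPrime) :
    ¬ 𝔭 * 𝔭 ∣ Ideal.span {(2 : 𝓞 K)} := by
  rintro ⟨D, hD⟩
  have h2ne : (2 : 𝓞 K) ≠ 0 := two_ne_zero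
  have hspan2 : Ideal.span {(2 : 𝓞 K)} ≠ 0 := by
    simpa [Ideal.zero_eq_bot, Ideal.span_singleton_eq_bot] using h2ne
  have hle : Ideal.span {(2 : 𝓞 K)} ≤ 𝔭 * D := by
    rw [hD, mul_assoc]
    exact Ideal.mul_le_right
  have hne : Ideal.span {(2 : 𝓞 K)} ≠ 𝔭 * D := by
    intro h
    have hJ : 𝔭 * D ≠ 0 := h ▸ hspan2
    have key : 𝔭 * (𝔭 * D) = 1 * (𝔭 * D) := by
      rw [one_mul, ← mul_assoc, ← hD, h]
    have h1 : 𝔭 = 1 := mul_right_cancel₀ hJ key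
    exact h𝔭.ne_top (by rw [← Ideal.one_eq_top, h1])
  obtain ⟨x, hxJ, hxn⟩ := SetLike.exists_of_lt (lt_of_le_of_ne hle hne)
  have hxx : x * x ∈ Ideal.span {(2 : 𝓞 K)} := by
    have h1 : x * x ∈ (𝔭 * D) * (𝔭 * D) := Ideal.mul_mem_mul hxJ hxJ
    have h2 : (𝔭 * D) * (𝔭 * D) = Ideal.span {(2 : 𝓞 K)} * D := by
      rw [hD]; ring
    rw [h2] at h1
    exact Ideal.mul_le_left h1
  exact aux_even_discr x hxn hxx hdisc

set_option maxHeartbeats 1000000 in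
/-- Let `K` be a number field with odd absolute discriminant, `𝔭 ⊆ O_K` a prime ideal
lying over `2`, and `α ∈ O_K` a nonzero element with `𝔭 ∤ αO_K`.  Then `2α` is not a
square in `K`, so `K(√(2α))` is a quadratic extension of `K`; moreover `𝔭` ramifies
in `K(√(2α))/K`. -/
theorem statement14 (K : Type*) [Field K] [NumberField K]
    (hdisc : Odd (NumberField.discr K))
    (𝔭 : Ideal (𝓞 K)) (h𝔭 : 𝔭.IsPrime) (h2 : (2 : 𝓞 K) ∈ 𝔭)
    (α : 𝓞 K) (hα : α ≠ 0) (hnd : ¬ 𝔭 ∣ Ideal.span {α}) :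
    ¬ IsSquare ((algebraMap (𝓞 K) K) (2 * α)) ∧
      ∀ (L : Type*) [Field L] [Algebra K L] [NumberField L] (s : L),
        s ^ 2 = algebraMap K L ((algebraMap (𝓞 K) K) (2 * α)) →
        Algebra.adjoin K {s} = ⊤ →
        Module.finrank K L = 2 ∧
          ∃ 𝔓 : Ideal (𝓞 L), 𝔓.IsPrime ∧
            Ideal.comap (algebraMap (𝓞 K) (𝓞 L)) 𝔓 = 𝔭 ∧
            1 < Ideal.ramificationIdx' 𝔭 𝔓 := by
  classical
  have hkey := aux_not_sq_dvd hdisc 𝔭 h𝔭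
  have h𝔭ne : 𝔭 ≠ ⊥ := by
    intro h
    rw [h, Ideal.mem_bot] at h2
    exact two_ne_zero h2
  have hprime𝔭 : Prime 𝔭 := Ideal.prime_of_isPrime h𝔭ne h𝔭
  have hdvd2 : 𝔭 ∣ Ideal.span {(2 : 𝓞 K)} :=
    Ideal.dvd_iff_le.mpr ((Ideal.span_singleton_le_iff_mem _).mpr h2)
  obtain ⟨C, hC⟩ := hdvd2
  have h𝔭C : ¬ 𝔭 ∣ C := by
    rintro ⟨E, hE⟩
    exact hkey ⟨E, by rw [hC, hE]; ring⟩
  -- main divisibility argument, in 𝓞 K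
  have main : ∀ t : 𝓞 K, 2 * α ≠ t * t := by
    intro t ht
    have hspan : Ideal.span {t} * Ideal.span {t} = 𝔭 * C * Ideal.span {α} := by
      rw [Ideal.span_singleton_mul_span_singleton, ← ht]
      have h' : Ideal.span {(2 * α : 𝓞 K)} = Ideal.span {(2 : 𝓞 K)} * Ideal.span {α} :=
        (Ideal.span_singleton_mul_span_singleton _ _).symm
      rw [h', hC]
    have h𝔭t : 𝔭 ∣ Ideal.span {t} := by
      have : 𝔭 ∣ Ideal.span {t} * Ideal.span {t} := by
        rw [hspan]
        exact ⟨C * Ideal.span {α}, by ring⟩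
      rcases (hprime𝔭.dvd_mul).mp this with h | h <;> exact h
    have hsq : 𝔭 ^ 2 ∣ 𝔭 * C * Ideal.span {α} := by
      rw [← hspan, pow_two]
      exact mul_dvd_mul h𝔭t h𝔭t
    have h1 : 𝔭 ^ 2 ∣ 𝔭 * C := (hprime𝔭.pow_dvd_of_dvd_mul_right 2 hnd) hsq
    have h2' : 𝔭 ^ 2 ∣ 𝔭 := by
      have := (hprime𝔭.pow_dvd_of_dvd_mul_right 2 h𝔭C) (by rwa [mul_comm 𝔭 C] at h1)
      exact this
    obtain ⟨E, hE⟩ := h2'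
    have h𝔭0 : 𝔭 ≠ 0 := h𝔭ne
    have : (1 : Ideal (𝓞 K)) = 𝔭 * E := by
      have : 𝔭 * 1 = 𝔭 * (𝔭 * E) := by rw [mul_one, ← mul_assoc, ← pow_two, ← hE]
      exact mul_left_cancel₀ h𝔭0 this
    exact hprime𝔭.not_unit (IsUnit.of_mul_eq_one _ this.symm)
  have part1 : ¬ IsSquare ((algebraMap (𝓞 K) K) (2 * α)) := by
    rintro ⟨r, hr⟩
    have hint : IsIntegral ℤ r := by
      refine IsIntegral.of_pow (n := 2) two_pos ?_
      rw [pow_two, ← hr]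
      exact RingOfIntegers.isIntegral_coe (2 * α)
    have heq : algebraMap (𝓞 K) K (2 * α) = algebraMap (𝓞 K) K (⟨r, hint⟩ * ⟨r, hint⟩) := by
      simp only [map_mul, RingOfIntegers.map_mk]
      exact hr
    exact main ⟨r, hint⟩ (RingOfIntegers.coe_injective heq)
  refine ⟨part1, ?_⟩
  intro L _ _ _ s hs hadj
  have h2α : (2 * α : 𝓞 K) ≠ 0 := mul_ne_zero two_ne_zero hα
  -- finrank
  have hintK : IsIntegral K s := IsIntegral.of_finite K s
  have hrange : s ∉ (algebraMap K L).range := by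
    rintro ⟨k, rfl⟩
    apply part1
    refine ⟨k, ?_⟩
    have := hs
    rw [← map_pow] at this
    have h' := (algebraMap K L).injective this
    rw [← h', pow_two]
  have hdeg : (minpoly K s).natDegree = 2 := by
    have hdvd : minpoly K s ∣ (Polynomial.X ^ 2 -
        Polynomial.C ((algebraMap (𝓞 K) K) (2 * α))) := by
      apply minpoly.dvd
      simp [hs]
    have hq0 : (Polynomial.X ^ 2 - Polynomial.C ((algebraMap (𝓞 K) K) (2 * α))) ≠ 0 :=
      (Polynomial.monic_X_pow_sub_C _ (two_ne_zero)).ne_zero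
    have hle : (minpoly K s).natDegree ≤ 2 := by
      have := Polynomial.natDegree_le_of_dvd hdvd hq0
      rwa [Polynomial.natDegree_X_pow_sub_C] at this
    have hge : 2 ≤ (minpoly K s).natDegree := (minpoly.two_le_natDegree_iff hintK).mpr hrange
    omega
  have hKs : IntermediateField.adjoin K {s} = ⊤ := by
    apply IntermediateField.toSubalgebra_injective
    rw [IntermediateField.adjoin_simple_toSubalgebra_of_isAlgebraic hintK.isAlgebraic, hadj,
      IntermediateField.top_toSubalgebra]
  have hfinrank : Module.finrank K L = 2 := by
    rw [← IntermediateField.finrank_top' (F := K) (E := L), ← hKs,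
      IntermediateField.adjoin.finrank hintK, hdeg]
  refine ⟨hfinrank, ?_⟩
  -- the prime above
  have hintZ : IsIntegral ℤ s := by
    refine IsIntegral.of_pow (n := 2) two_pos ?_
    rw [hs]
    exact (RingOfIntegers.isIntegral_coe (2 * α)).map (IsScalarTower.toAlgHom ℤ K L)
  set t : 𝓞 L := ⟨s, hintZ⟩ with hht
  have hinjL : Function.Injective (algebraMap (𝓞 L) L) := RingOfIntegers.coe_injective
  have heqt : algebraMap (𝓞 K) (𝓞 L) (2 * α) = t * t := by
    apply hinjL
    have hcoe : algebraMap (𝓞 L) L (t * t) = s * s := rfl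
    rw [hcoe, ← pow_two, hs, ← IsScalarTower.algebraMap_apply (𝓞 K) K L,
      IsScalarTower.algebraMap_apply (𝓞 K) (𝓞 L) L]
  -- injectivity of the map of rings of integers
  have hinj : Function.Injective (algebraMap (𝓞 K) (𝓞 L)) := by
    intro a b hab
    apply RingOfIntegers.coe_injective (K := K)
    apply (algebraMap K L).injective
    rw [← IsScalarTower.algebraMap_apply (𝓞 K) K L, ← IsScalarTower.algebraMap_apply (𝓞 K) K L,
      IsScalarTower.algebraMap_apply (𝓞 K) (𝓞 L) L, IsScalarTower.algebraMap_apply (𝓞 K) (𝓞 L) L,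
      hab]
  haveI : Algebra.IsIntegral (𝓞 K) (𝓞 L) := by
    constructor
    intro y
    exact IsIntegral.tower_top (Algebra.IsIntegral.isIntegral (R := ℤ) y)
  obtain ⟨𝔓, h𝔓prime, h𝔓comap⟩ :=
    Ideal.exists_ideal_over_prime_of_isIntegral_of_isDomain 𝔭
      (by rw [(RingHom.injective_iff_ker_eq_bot _).mp hinj]; exact bot_le)
  have h𝔓ne : 𝔓 ≠ ⊥ := by
    intro h
    rw [h, Ideal.comap_bot_of_injective _ hinj] at h𝔓comap
    exact h𝔭ne h𝔓comap.symm
  have hprime𝔓 : Prime 𝔓 := Ideal.prime_of_isPrime h𝔓ne h𝔓prime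
  refine ⟨𝔓, h𝔓prime, h𝔓comap, ?_⟩
  set f := algebraMap (𝓞 K) (𝓞 L) with hf
  have hmapeq : Ideal.span {t} * Ideal.span {t}
      = Ideal.map f 𝔭 * Ideal.map f C * Ideal.map f (Ideal.span {α}) := by
    rw [Ideal.span_singleton_mul_span_singleton, ← heqt, ← Ideal.map_mul, ← Ideal.map_mul,
      ← hC, Ideal.span_singleton_mul_span_singleton, Ideal.map_span, Set.image_singleton]
  have h𝔓map : 𝔓 ∣ Ideal.map f 𝔭 := by
    rw [Ideal.dvd_iff_le, ← h𝔓comap]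
    exact Ideal.map_comap_le
  have h𝔓t : 𝔓 ∣ Ideal.span {t} := by
    have : 𝔓 ∣ Ideal.span {t} * Ideal.span {t} := by
      refine h𝔓map.trans ?_
      rw [hmapeq]
      exact ⟨Ideal.map f C * Ideal.map f (Ideal.span {α}), by ring⟩
    rcases (hprime𝔓.dvd_mul).mp this with h | h <;> exact h
  have hnC : ¬ 𝔓 ∣ Ideal.map f C := by
    intro h
    apply h𝔭C
    rw [Ideal.dvd_iff_le, ← h𝔓comap]
    exact Ideal.le_comap_of_map_le (Ideal.le_of_dvd h)
  have hnα : ¬ 𝔓 ∣ Ideal.map f (Ideal.span {α}) := by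
    intro h
    apply hnd
    rw [Ideal.dvd_iff_le, ← h𝔓comap]
    exact Ideal.le_comap_of_map_le (Ideal.le_of_dvd h)
  have hfinal : 𝔓 ^ 2 ∣ Ideal.map f 𝔭 := by
    have hsq : 𝔓 ^ 2 ∣ Ideal.map f 𝔭 * (Ideal.map f C * Ideal.map f (Ideal.span {α})) := by
      rw [← mul_assoc, ← hmapeq, pow_two]
      exact mul_dvd_mul h𝔓t h𝔓t
    refine (hprime𝔓.pow_dvd_of_dvd_mul_right 2 ?_) hsq
    intro h
    rcases (hprime𝔓.dvd_mul).mp h with h' | h'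
    · exact hnC h'
    · exact hnα h'
  -- conclude about ramification index
  have hmapne : Ideal.map f 𝔭 ≠ ⊥ := by
    intro h
    have hker : 𝔭 ≤ RingHom.ker f := Ideal.map_le_iff_le_comap.mp (le_of_eq h)
    rw [(RingHom.injective_iff_ker_eq_bot _).mp hinj] at hker
    exact h𝔭ne (le_bot_iff.mp hker)
  rw [Ideal.IsDedekindDomain.ramificationIdx'_eq_normalizedFactors_count hmapne h𝔓prime h𝔓ne]
  have hcount := (UniqueFactorizationMonoid.dvd_iff_normalizedFactors_le_normalizedFactors
    (pow_ne_zero 2 h𝔓ne) hmapne).mp hfinal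
  rw [UniqueFactorizationMonoid.normalizedFactors_pow,
    UniqueFactorizationMonoid.normalizedFactors_irreducible hprime𝔓.irreducible,
    normalize_eq, Multiset.nsmul_singleton, ← Multiset.le_count_iff_replicate_le] at hcount
  rw [hf] at hcount
  omega
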